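/- Let A be a commutative noetherian ring and let M, N be finitely generated A-modules. Let 𝒢_M and 𝒢_N denote the functors from the category of finitely generated A-modules to itself sending P to G_M(P) (respectively G_N(P)), and sending an A-linear map q: P → Q to the restriction to G_M(P) of the postcomposition map Hom_A(M*, P) → Hom_A(M*, Q), which carries G_M(P) into G_M(Q). If Λ and Λ' are two natural transformations 𝒢_M → 𝒢_N such that the components Λ_A and Λ'_A at the module A are equal, then Λ = Λ'; that is, a natural transformation 𝒢_M → 𝒢_N is uniquely determined by its evaluation at A. -/

import Mathlib

open Module LinearMap TensorProduct

/-- The natural map `α_{M,P} : M ⊗ P → Hom(M*, P)`, `α(m ⊗ p)(λ) = λ(m) • p`. -/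
noncomputable def alphaMap (A : Type) [CommRing A] (M P : Type) [AddCommGroup M]
    [Module A M] [AddCommGroup P] [Module A P] :
    M ⊗[A] P →ₗ[A] (Module.Dual A M →ₗ[A] P) :=
  (dualTensorHom A (Module.Dual A M) P) ∘ₗ
    (TensorProduct.map (Module.Dual.eval A M) LinearMap.id)

/-- `G_M(P)` is the image of `α_{M,P} : M ⊗ P → Hom(M*, P)`. -/
noncomputable def GFun (A : Type) [CommRing A] (M P : Type) [AddCommGroup M] [Module A M]
    [AddCommGroup P] [Module A P] : Submodule A (Module.Dual A M →ₗ[A] P) :=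
  LinearMap.range (alphaMap A M P)

/-- Postcomposition with `q : P → Q` carries `G_M(P)` into `G_M(Q)`. -/
lemma comp_mem_GFun {A : Type} [CommRing A] {M P Q : Type} [AddCommGroup M] [Module A M]
    [AddCommGroup P] [Module A P] [AddCommGroup Q] [Module A Q]
    (q : P →ₗ[A] Q) {x : Module.Dual A M →ₗ[A] P} (hx : x ∈ GFun A M P) :
    q ∘ₗ x ∈ GFun A M Q := by
  obtain ⟨t, rfl⟩ := hx
  refine ⟨LinearMap.lTensor M q t, ?_⟩
  induction t using TensorProduct.induction_on with
  | zero => simp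
  | tmul m p => ext lam; simp [alphaMap]
  | add a b ha hb =>
      simp only [map_add, ha, hb]
      ext lam; simp

/-- The map `G_M(P) → G_M(Q)` induced by postcomposition with `q : P → Q`. -/
noncomputable def GFunMap (A : Type) [CommRing A] (M : Type) [AddCommGroup M] [Module A M]
    {P Q : Type} [AddCommGroup P] [Module A P] [AddCommGroup Q] [Module A Q]
    (q : P →ₗ[A] Q) : ↥(GFun A M P) →ₗ[A] ↥(GFun A M Q) :=
  LinearMap.restrict (LinearMap.llcomp A (Module.Dual A M) P Q q)
    (fun _ hx => comp_mem_GFun q hx)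

/-- A natural transformation `𝒢_M → 𝒢_N` is uniquely determined by its component at `A`. -/
theorem stmt19 (A : Type) [CommRing A] [IsNoetherianRing A]
    (M N : Type) [AddCommGroup M] [Module A M] [Module.Finite A M]
    [AddCommGroup N] [Module A N] [Module.Finite A N]
    (Λ Λ' : ∀ (P : Type) [AddCommGroup P] [Module A P] [Module.Finite A P],
      ↥(GFun A M P) →ₗ[A] ↥(GFun A N P))
    (hΛ : ∀ (P Q : Type) [AddCommGroup P] [Module A P] [Module.Finite A P]
      [AddCommGroup Q] [Module A Q] [Module.Finite A Q] (q : P →ₗ[A] Q),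
      (Λ Q) ∘ₗ GFunMap A M q = GFunMap A N q ∘ₗ (Λ P))
    (hΛ' : ∀ (P Q : Type) [AddCommGroup P] [Module A P] [Module.Finite A P]
      [AddCommGroup Q] [Module A Q] [Module.Finite A Q] (q : P →ₗ[A] Q),
      (Λ' Q) ∘ₗ GFunMap A M q = GFunMap A N q ∘ₗ (Λ' P))
    (h : Λ A = Λ' A) :
    ∀ (P : Type) [AddCommGroup P] [Module A P] [Module.Finite A P], Λ P = Λ' P := by
  intro P _ _ _
  suffices H : ∀ t : M ⊗[A] P,
      Λ P ⟨alphaMap A M P t, ⟨t, rfl⟩⟩ = Λ' P ⟨alphaMap A M P t, ⟨t, rfl⟩⟩ by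
    ext x
    obtain ⟨t, ht⟩ := x.2
    have hx : x = ⟨alphaMap A M P t, ⟨t, rfl⟩⟩ := Subtype.ext ht.symm
    rw [hx, H]
  intro t
  induction t using TensorProduct.induction_on with
  | zero =>
    have h0 : (⟨alphaMap A M P 0, ⟨0, rfl⟩⟩ : ↥(GFun A M P)) = 0 :=
      Subtype.ext (map_zero _)
    rw [h0, map_zero, map_zero]
  | add x y hx hy =>
    have hadd : (⟨alphaMap A M P (x + y), ⟨x + y, rfl⟩⟩ : ↥(GFun A M P)) =
        ⟨alphaMap A M P x, ⟨x, rfl⟩⟩ + ⟨alphaMap A M P y, ⟨y, rfl⟩⟩ :=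
      Subtype.ext (map_add _ _ _)
    rw [hadd, map_add, map_add, hx, hy]
  | tmul m p =>
    set q : A →ₗ[A] P := LinearMap.toSpanSingleton A P p with hq
    set e : ↥(GFun A M A) := ⟨alphaMap A M A (m ⊗ₜ 1), ⟨m ⊗ₜ 1, rfl⟩⟩ with he
    have e1 : GFunMap A M q e = ⟨alphaMap A M P (m ⊗ₜ p), ⟨m ⊗ₜ p, rfl⟩⟩ := by
      apply Subtype.ext
      ext lam
      change (q ∘ₗ alphaMap A M A (m ⊗ₜ 1)) lam = alphaMap A M P (m ⊗ₜ p) lam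
      simp [GFunMap, alphaMap, q, e, LinearMap.restrict_apply]
    have n1 := LinearMap.congr_fun (hΛ A P q) e
    have n2 := LinearMap.congr_fun (hΛ' A P q) e
    simp only [LinearMap.comp_apply, e1] at n1 n2
    rw [n1, n2, h]
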